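/- Let J : V → W be a linear map and L_W ⊆ W ⊕ W* a lagrangian subspace. Then the backward image J⁻¹∘L_W := { (X, J*β) ∈ V ⊕ V* : X ∈ V, β ∈ W*, (J(X), β) ∈ L_W } is a lagrangian subspace of V ⊕ V*. -/

import Mathlib

/-- The backward image of `L_W` under `J`. -/
def backwardImage {V W : Type*} [AddCommGroup V] [Module ℝ V] [AddCommGroup W] [Module ℝ W]
    (J : V →ₗ[ℝ] W) (LW : Submodule ℝ (W × Module.Dual ℝ W)) :
    Set (V × Module.Dual ℝ V) :=
  {p | ∃ (X : V) (β : Module.Dual ℝ W), p = (X, J.dualMap β) ∧ (J X, β) ∈ LW}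

section Aux

variable {W : Type*} [AddCommGroup W] [Module ℝ W]

/-- The canonical symmetric pairing on `W × W*`. -/
noncomputable def canonPair (W : Type*) [AddCommGroup W] [Module ℝ W] :
    LinearMap.BilinForm ℝ (W × Module.Dual ℝ W) :=
  LinearMap.mk₂ ℝ (fun x y => y.2 x.1 + x.2 y.1)
    (by intros; simp; ring)
    (by intros; simp; ring)
    (by intros; simp; ring)
    (by intros; simp; ring)

@[simp] lemma canonPair_apply (x y : W × Module.Dual ℝ W) :
    canonPair W x y = y.2 x.1 + x.2 y.1 := rfl

lemma canonPair_symm : (canonPair W).IsSymm := by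
  constructor; intro x y; simp [add_comm]

lemma canonPair_refl : (canonPair W).IsRefl := canonPair_symm.isRefl

lemma canonPair_nondeg : (canonPair W).Nondegenerate := by
  refine (LinearMap.IsRefl.nondegenerate_iff_separatingLeft (B := canonPair W) canonPair_refl).mpr ?_
  intro x hx
  have h1 : x.1 = 0 := by
    rw [← Module.forall_dual_apply_eq_zero_iff ℝ]
    intro φ
    have := hx (0, φ)
    simpa using this
  have h2 : x.2 = 0 := by
    ext w
    have := hx (w, 0)
    simpa using this
  exact Prod.ext h1 h2

lemma canonPair_orthogonal_sup (U U' : Submodule ℝ (W × Module.Dual ℝ W)) :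
    (canonPair W).orthogonal (U ⊔ U') =
      (canonPair W).orthogonal U ⊓ (canonPair W).orthogonal U' := by
  apply le_antisymm
  · exact le_inf ((canonPair W).orthogonal_le le_sup_left)
      ((canonPair W).orthogonal_le le_sup_right)
  · rintro x ⟨hx1, hx2⟩ n hn
    obtain ⟨u, hu, u', hu', rfl⟩ := Submodule.mem_sup.mp hn
    have := hx1 u hu
    have := hx2 u' hu'
    rw [map_add, LinearMap.add_apply, hx1 u hu, hx2 u' hu', add_zero]

end Aux

/-- The backward image of a lagrangian subspace under a linear map
is lagrangian for the canonical pairing. -/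
theorem backwardImage_lagrangian {V W : Type*} [AddCommGroup V] [Module ℝ V]
    [FiniteDimensional ℝ V] [AddCommGroup W] [Module ℝ W] [FiniteDimensional ℝ W]
    (J : V →ₗ[ℝ] W) (LW : Submodule ℝ (W × Module.Dual ℝ W))
    (hLW : ∀ x : W × Module.Dual ℝ W, x ∈ LW ↔ ∀ y ∈ LW, y.2 x.1 + x.2 y.1 = 0) :
    ∀ p : V × Module.Dual ℝ V,
      p ∈ backwardImage J LW ↔ ∀ q ∈ backwardImage J LW, q.2 p.1 + p.2 q.1 = 0 := by
  intro p
  constructor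
  · rintro ⟨X, β, rfl, hXβ⟩ q ⟨Y, γ, rfl, hYγ⟩
    have := (hLW (J X, β)).mp hXβ (J Y, γ) hYγ
    simpa [LinearMap.dualMap_apply, add_comm] using this
  · intro hp
    obtain ⟨X, α⟩ := p
    -- membership in LW implies the pairing condition, and conversely
    have hLWzero : (0 : W × Module.Dual ℝ W) ∈ LW := LW.zero_mem
    -- α vanishes on ker J
    have hker : ∀ Y ∈ LinearMap.ker J, α Y = 0 := by
      intro Y hY
      have hq : ((Y, (0 : Module.Dual ℝ V)) : V × Module.Dual ℝ V) ∈ backwardImage J LW := by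
        refine ⟨Y, 0, by simp, ?_⟩
        rw [LinearMap.mem_ker.mp hY]
        simp only [Prod.mk_zero_zero]; exact hLWzero
      have := hp _ hq
      simpa using this
    -- hence α is in the range of J.dualMap
    have hα : α ∈ LinearMap.range J.dualMap := by
      rw [LinearMap.range_dualMap_eq_dualAnnihilator_ker]
      exact (Submodule.mem_dualAnnihilator α).mpr hker
    obtain ⟨β₀, hβ₀⟩ := hα
    -- LW equals its own orthogonal for the canonical pairing
    have hLW' : (canonPair W).orthogonal LW = LW := by
      ext x
      rw [LinearMap.BilinForm.mem_orthogonal_iff, hLW x]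
      constructor
      · intro h y hy; have := h y hy; simpa [LinearMap.BilinForm.IsOrtho, add_comm] using this
      · intro h y hy; have := h y hy
        simpa [LinearMap.BilinForm.IsOrtho, add_comm] using this
    set R : Submodule ℝ W := LinearMap.range J with hR
    set T : Submodule ℝ (W × Module.Dual ℝ W) := R.prod ⊤ with hT
    set Z : Submodule ℝ (W × Module.Dual ℝ W) :=
      (⊥ : Submodule ℝ W).prod R.dualAnnihilator with hZ
    -- orthogonal of T is Z
    have hTZ : (canonPair W).orthogonal T = Z := by
      ext x
      simp only [LinearMap.BilinForm.mem_orthogonal_iff, hT, hZ, Submodule.mem_prod,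
        Submodule.mem_bot, Submodule.mem_top, Submodule.mem_dualAnnihilator,
        LinearMap.BilinForm.IsOrtho, canonPair_apply]
      constructor
      · intro h
        constructor
        · rw [← Module.forall_dual_apply_eq_zero_iff ℝ]
          intro φ
          have := h (0, φ) ⟨R.zero_mem, trivial⟩
          simpa using this
        · intro w hw
          have := h (w, 0) ⟨hw, trivial⟩
          simpa using this
      · rintro ⟨h1, h2⟩ n ⟨hn1, _⟩
        rw [h1, map_zero, h2 n.1 hn1, add_zero]
    -- key orthogonality: (J X, β₀) is orthogonal to LW ⊓ T
    have hkey : ((J X, β₀) : W × Module.Dual ℝ W) ∈ (canonPair W).orthogonal (LW ⊓ T) := by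
      rintro ⟨w, γ⟩ ⟨hwLW, hwR, -⟩
      obtain ⟨Y, rfl⟩ := hwR
      have hq : ((Y, J.dualMap γ) : V × Module.Dual ℝ V) ∈ backwardImage J LW :=
        ⟨Y, γ, rfl, hwLW⟩
      have := hp _ hq
      simp only [LinearMap.dualMap_apply] at this
      simp only [LinearMap.BilinForm.IsOrtho, canonPair_apply]
      have hβ₀J : β₀ (J Y) = α Y := by rw [← hβ₀]; rfl
      rw [hβ₀J]
      linarith [this]
    -- orthogonal of LW ⊓ T equals LW ⊔ Z
    have horth : (canonPair W).orthogonal (LW ⊓ T) = LW ⊔ Z := by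
      have h1 : (canonPair W).orthogonal (LW ⊔ Z) = LW ⊓ T := by
        rw [canonPair_orthogonal_sup, hLW']
        congr 1
        rw [← hTZ, LinearMap.BilinForm.orthogonal_orthogonal canonPair_nondeg canonPair_refl]
      rw [← h1, LinearMap.BilinForm.orthogonal_orthogonal canonPair_nondeg canonPair_refl]
    rw [horth] at hkey
    obtain ⟨u, hu, z, hz, huz⟩ := Submodule.mem_sup.mp hkey
    obtain ⟨hz1, hz2⟩ := Submodule.mem_prod.mp hz
    rw [Submodule.mem_bot] at hz1
    -- u = (J X, β₀ - z.2)
    have hu1 : u.1 = J X := by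
      have := congrArg Prod.fst huz
      simp only [Prod.fst_add] at this
      rw [hz1, add_zero] at this
      exact this
    have hu2 : u.2 = β₀ - z.2 := by
      have := congrArg Prod.snd huz
      simp only [Prod.snd_add] at this
      rw [← this]; abel
    refine ⟨X, u.2, ?_, ?_⟩
    · have hz2J : J.dualMap z.2 = 0 := by
        ext v
        exact (Submodule.mem_dualAnnihilator z.2).mp hz2 (J v) ⟨v, rfl⟩
      rw [hu2]
      have : J.dualMap (β₀ - z.2) = α := by
        rw [map_sub, hz2J, sub_zero, hβ₀]
      rw [this]
    · rw [← hu1]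
      exact (Prod.mk.eta (p := u)) ▸ hu
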